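/- There exist ε > 0 and R₀ > 1/ε¹⁰ such that for all R > R₀ and every w ∈ V⁻ there is a constant c = c(w) > 1 with |xₙ| ≥ c^{2ⁿ} for all n ≥ 0, where Hⁿ(w) = (xₙ,yₙ,zₙ); in particular ‖Hⁿ(w)‖ → ∞ at the super-exponential rate (const)^{2ⁿ} for every w ∈ V⁻. -/

import Mathlib

open Complex Filter Topology

/-- The quadratic automorphism `H(x,y,z) = (xy + az, x² + by, x)` of `ℂ³`. -/
noncomputable def H (a b : ℂ) (w : ℂ × ℂ × ℂ) : ℂ × ℂ × ℂ :=
  (w.1 * w.2.1 + a * w.2.2, w.1 ^ 2 + b * w.2.1, w.1)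

/-- `V⁻ = {(x,y,z) : |xy| > max{R, 2|az|, |x|^{3/2}, (1/ε)|y|^{3/2}}}`. -/
noncomputable def Vminus (a : ℂ) (ε R : ℝ) : Set (ℂ × ℂ × ℂ) :=
  {w | ‖w.1 * w.2.1‖ >
    max R (max (2 * ‖a * w.2.2‖)
      (max (‖w.1‖ ^ ((3 : ℝ) / 2))
        ((1 / ε) * ‖w.2.1‖ ^ ((3 : ℝ) / 2))))}

/-- `U⁺ = ⋃_{n≥0} H⁻ⁿ(V⁻)`, i.e. the points whose forward orbit meets `V⁻`. -/
noncomputable def Uplus (a b : ℂ) (ε R : ℝ) : Set (ℂ × ℂ × ℂ) :=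
  ⋃ n : ℕ, (H a b)^[n] ⁻¹' Vminus a ε R

/-- `K⁺ = ℂ³ \ U⁺`. -/
noncomputable def Kplus (a b : ℂ) (ε R : ℝ) : Set (ℂ × ℂ × ℂ) :=
  (Uplus a b ε R)ᶜ

/-- `Mₙ = max{R, 2|azₙ|, |xₙ|^{3/2}, (1/ε)|yₙ|^{3/2}}` where `Hⁿ(w) = (xₙ,yₙ,zₙ)`. -/
noncomputable def Mseq (a b : ℂ) (ε R : ℝ) (w : ℂ × ℂ × ℂ) (n : ℕ) : ℝ :=
  max R (max (2 * ‖a * ((H a b)^[n] w).2.2‖)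
    (max (‖((H a b)^[n] w).1‖ ^ ((3 : ℝ) / 2))
      ((1 / ε) * ‖((H a b)^[n] w).2.1‖ ^ ((3 : ℝ) / 2))))

/-- there exist `ε > 0` and `R₀ > 1/ε¹⁰` such that for all
`R > R₀` and every `w ∈ V⁻` there is a constant `c = c(w) > 1` with
`|xₙ| ≥ c^{2ⁿ}` for all `n ≥ 0`, where `Hⁿ(w) = (xₙ,yₙ,zₙ)`. -/
/- ### small rpow helpers -/

private lemma rpow_half_sq {u : ℝ} (hu : 0 ≤ u) : (u ^ ((1:ℝ)/2)) ^ 2 = u := by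
  rw [← Real.rpow_natCast (u ^ ((1:ℝ)/2)) 2, ← Real.rpow_mul hu]
  norm_num

private lemma rpow_half_lt {u v : ℝ} (hu : 0 ≤ u) (hv : 0 ≤ v) (h : u < v ^ 2) :
    u ^ ((1:ℝ)/2) < v := by
  have h2 : ((v ^ 2 : ℝ)) ^ ((1:ℝ)/2) = v := by
    rw [← Real.rpow_natCast v 2, ← Real.rpow_mul hv]
    norm_num
  calc u ^ ((1:ℝ)/2) < (v ^ 2) ^ ((1:ℝ)/2) :=
        Real.rpow_lt_rpow hu h (by norm_num)
    _ = v := h2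

private lemma rpow_three_halves {x : ℝ} (hx : 0 < x) :
    x ^ ((3:ℝ)/2) = x * x ^ ((1:ℝ)/2) := by
  rw [show ((3:ℝ)/2) = 1 + 1/2 by norm_num, Real.rpow_add hx, Real.rpow_one]

private lemma abs_lower {u v : ℂ} :
    ‖u‖ - ‖v‖ ≤ ‖u + v‖ := by
  have h := norm_add_le (u + v) (-v)
  simp only [add_neg_cancel_right, norm_neg] at h
  linarith

/- ### isolated arithmetic facts (tiny contexts for nlinarith) -/

private lemma ar1 {ε x s y : ℝ} (hε0 : 0 < ε) (h : (1/ε) * s < x)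
    (hs0 : 0 ≤ s) (hs : s^2 = y) : y < ε^2 * x^2 := by
  have h1 : s < ε * x := by
    have h2 := mul_lt_mul_of_pos_left h hε0
    calc s = ε * ((1/ε) * s) := by field_simp
      _ < ε * x := h2
  nlinarith

private lemma ar2 {ε x y R : ℝ} (hR1 : R < x*y) (hyub : y < ε^2*x^2) (hx0 : 0 < x) :
    R < ε^2 * x^3 := by nlinarith

private lemma ar3 {ε x R : ℝ} (hε10 : 1 < R*ε^10) (hRx : R < ε^2*x^3) (hε0 : 0 < ε) :
    1/ε^12 < x^3 := by
  rw [div_lt_iff₀ (by positivity)]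
  nlinarith [mul_lt_mul_of_pos_right hRx (show (0:ℝ) < ε^10 by positivity)]

private lemma ar4 {ε x : ℝ} (hx3 : 1/ε^12 < x^3) (hx0 : 0 ≤ x) (hε0 : 0 < ε) :
    1/ε^4 < x := by
  have h3 : (1/ε^4) ^ 3 < x ^ 3 := by
    rw [show ((1:ℝ)/ε^4)^3 = 1/ε^12 by field_simp]
    exact hx3
  exact lt_of_pow_lt_pow_left₀ 3 hx0 h3

private lemma ar5 {ε x : ℝ} (hε0 : 0 < ε) (hε4 : ε ≤ 1/4) (hinv4 : 1/ε^4 < x) :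
    16/ε^2 < x ∧ 256 < x ∧ 16 < x*ε^2 := by
  have hε2 : ε^2 ≤ 1/16 := by nlinarith
  have h1 : 16/ε^2 ≤ 1/ε^4 := by
    rw [div_le_div_iff₀ (by positivity) (by positivity)]
    nlinarith [mul_le_mul_of_nonneg_right hε2 (sq_nonneg ε)]
  have h2 : (256:ℝ) ≤ 16/ε^2 := by
    rw [le_div_iff₀ (by positivity)]
    nlinarith
  have h3 : 16/ε^2 < x := lt_of_le_of_lt h1 hinv4
  refine ⟨h3, by linarith, ?_⟩
  rw [div_lt_iff₀ (by positivity)] at h3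
  linarith

private lemma ar6 {x y R p : ℝ} (hR1 : R < x*y) (hx256 : 256 < x)
    (hxy : 0 < x*y) (hprod : x*y*x^2/4 ≤ p) : R < p := by
  nlinarith [mul_nonneg hxy.le (show (0:ℝ) ≤ x^2 - 4 by nlinarith)]

private lemma ar7 {x y R A p : ℝ} (hA0 : 0 ≤ A) (hx0 : 0 < x) (hx256 : 256 < x)
    (hRa : 8*A ≤ R) (hR1 : R < x*y) (hprod : x*y*x^2/4 ≤ p) :
    2*(A*x) < p := by
  have e1 : 2*(A*x) ≤ 2*(A*x^2) := by
    nlinarith [mul_nonneg (mul_nonneg hA0 hx0.le) (show (0:ℝ) ≤ x - 1 by linarith)]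
  have e2 : 2*(A*x^2) ≤ R * x^2/4 := by
    nlinarith [mul_le_mul_of_nonneg_right hRa (sq_nonneg x)]
  have e3 : R * x^2/4 < x*y*x^2/4 := by
    nlinarith [mul_lt_mul_of_pos_right hR1 (show (0:ℝ) < x^2/4 by positivity)]
  linarith

private lemma ar8 {ε x x' y' : ℝ} (hε0 : 0 < ε) (hε4 : ε ≤ 1/4) (hx0 : 0 < x)
    (hx256 : 256 < x) (hxub2 : x' ≤ (3/2) * (ε^2*x^3)) (hy'2 : x^4/4 ≤ y'^2) :
    x' < y'^2 := by
  have hε2 : ε^2 ≤ 1/16 := by nlinarith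
  nlinarith [pow_pos hx0 3, mul_le_mul_of_nonneg_right hε2 (pow_pos hx0 3).le]

private lemma ar10 {s y x : ℝ} (hs0 : 0 ≤ s) (h : s < y) (hs : s^2 = x) :
    x < y^2 := by nlinarith

private lemma ar9 {ε x y x' y' : ℝ} (hε0 : 0 < ε) (hx0 : 0 < x) (hy0 : 0 ≤ y)
    (hy'up : y' ≤ 2*x^2) (hx'sq : (x*y/2)^2 ≤ x'^2) (hysq : x < y^2)
    (hεx16 : 16 < x*ε^2) : y' < (ε*x')^2 := by
  have h1 : ε^2*(x^2*x) ≤ ε^2*(x^2*y^2) := by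
    nlinarith [mul_le_mul_of_nonneg_left hysq.le
      (show (0:ℝ) ≤ ε^2*x^2 by positivity)]
  have h2 : 16*x^2 < x*ε^2*x^2 := by
    nlinarith [mul_lt_mul_of_pos_right hεx16 (pow_pos hx0 2)]
  have h3 : ε^2*(x*y/2)^2 ≤ ε^2*x'^2 := by
    nlinarith [mul_le_mul_of_nonneg_left hx'sq (sq_nonneg ε)]
  nlinarith [h1, h2, h3]

/- ### the key invariance / growth step -/

set_option maxHeartbeats 2000000 in
private lemma step (a b : ℂ) (ε R : ℝ) (hε0 : 0 < ε) (hε4 : ε ≤ 1/4)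
    (hbε : ‖b‖ * ε ^ 2 ≤ 1/2)
    (hRε : 1/ε^10 < R) (hRa : 8 * ‖a‖ ≤ R)
    {w : ℂ × ℂ × ℂ} (hw : w ∈ Vminus a ε R) :
    H a b w ∈ Vminus a ε R ∧
    ‖w.1‖ * ‖w.2.1‖ / 2 ≤ ‖(H a b w).1‖ ∧
    ‖w.1‖ ^ 2 / 2 ≤ ‖(H a b w).2.1‖ ∧
    256 < ‖w.1‖ := by
  set x := ‖w.1‖ with hxdef
  set y := ‖w.2.1‖ with hydef
  set z := ‖w.2.2‖ with hzdef
  set A := ‖a‖ with hAdef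
  set B := ‖b‖ with hBdef
  have hx0' : 0 ≤ x := norm_nonneg _
  have hy0' : 0 ≤ y := norm_nonneg _
  have hz0' : 0 ≤ z := norm_nonneg _
  have hA0 : 0 ≤ A := norm_nonneg _
  have hB0 : 0 ≤ B := norm_nonneg _
  simp only [Vminus, Set.mem_setOf_eq, norm_mul, gt_iff_lt, max_lt_iff] at hw
  have hR1 := hw.1
  have hz := hw.2.1
  have hx32 := hw.2.2.1
  have hy32 := hw.2.2.2
  have hR0 : 0 < R := lt_trans (by positivity) hRε
  have hxy : 0 < x * y := lt_trans hR0 hR1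
  have hx0 : 0 < x := by
    rcases hx0'.lt_or_eq with h | h
    · exact h
    · exfalso; rw [← h, zero_mul] at hxy; exact lt_irrefl 0 hxy
  have hy0 : 0 < y := by
    rcases hy0'.lt_or_eq with h | h
    · exact h
    · exfalso; rw [← h, mul_zero] at hxy; exact lt_irrefl 0 hxy
  -- F1 : x^(1/2) < y
  have hyx : x ^ ((1:ℝ)/2) < y := by
    rw [rpow_three_halves hx0] at hx32
    exact (mul_lt_mul_iff_right₀ hx0).mp hx32
  -- F2 : (1/ε) * y^(1/2) < x
  have hxy2 : (1/ε) * y ^ ((1:ℝ)/2) < x := by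
    rw [rpow_three_halves hy0] at hy32
    have h : (1/ε) * y ^ ((1:ℝ)/2) * y < x * y := by
      calc (1/ε) * y ^ ((1:ℝ)/2) * y = 1/ε * (y * y ^ ((1:ℝ)/2)) := by ring
        _ < x * y := hy32
    exact (mul_lt_mul_iff_left₀ hy0).mp h
  -- F3 : y < ε^2 x^2
  have hyub : y < ε^2 * x^2 :=
    ar1 hε0 hxy2 (Real.rpow_nonneg hy0' _) (rpow_half_sq hy0')
  -- F4, F5
  have hRx : R < ε^2 * x^3 := ar2 hR1 hyub hx0
  have hε10 : 1 < R * ε^10 := by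
    rw [div_lt_iff₀ (by positivity)] at hRε; linarith
  have hinv4 : 1/ε^4 < x := ar4 (ar3 hε10 hRx hε0) hx0' hε0
  obtain ⟨hx16, hx256, hεx16⟩ := ar5 hε0 hε4 hinv4
  -- components of H w
  have hHx : (H a b w).1 = w.1 * w.2.1 + a * w.2.2 := rfl
  have hHy : (H a b w).2.1 = w.1 ^ 2 + b * w.2.1 := rfl
  have hHz : (H a b w).2.2 = w.1 := rfl
  set x' := ‖(H a b w).1‖ with hx'def
  set y' := ‖(H a b w).2.1‖ with hy'def
  have haz : A * z ≤ x * y / 2 := by linarith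
  have hx'low : x * y / 2 ≤ x' := by
    have h := abs_lower (u := w.1 * w.2.1) (v := a * w.2.2)
    rw [norm_mul, norm_mul] at h
    rw [hx'def, hHx]
    linarith
  have hx'up : x' ≤ (3/2) * (x * y) := by
    have h := norm_add_le (w.1 * w.2.1) (a * w.2.2)
    rw [norm_mul, norm_mul] at h
    rw [hx'def, hHx]
    linarith
  have hBy : B * y ≤ x^2 / 2 := by
    have h1 : B * y ≤ B * (ε^2 * x^2) :=
      mul_le_mul_of_nonneg_left hyub.le hB0
    have h2 : B * (ε^2 * x^2) ≤ (1/2) * x^2 := by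
      have h3 := mul_le_mul_of_nonneg_right hbε (sq_nonneg x)
      linarith [h3]
    linarith
  have hy'low : x^2 / 2 ≤ y' := by
    have h := abs_lower (u := w.1 ^ 2) (v := b * w.2.1)
    rw [norm_mul, norm_pow] at h
    rw [hy'def, hHy]
    linarith
  have hy'up : y' ≤ 2 * x^2 := by
    have h := norm_add_le (w.1 ^ 2) (b * w.2.1)
    rw [norm_mul, norm_pow] at h
    rw [hy'def, hHy]
    linarith [sq_nonneg x]
  have hx'0 : 0 < x' := lt_of_lt_of_le (by positivity) hx'low
  have hy'0 : 0 < y' := lt_of_lt_of_le (by positivity) hy'low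
  have hprod : x * y * x^2 / 4 ≤ x' * y' := by
    have h := mul_le_mul hx'low hy'low (by positivity : (0:ℝ) ≤ x^2/2) hx'0.le
    linarith [h]
  refine ⟨?_, hx'low, hy'low, hx256⟩
  simp only [Vminus, Set.mem_setOf_eq, norm_mul, gt_iff_lt, max_lt_iff, hHz]
  rw [← hx'def, ← hy'def]
  refine ⟨ar6 hR1 hx256 hxy hprod, ar7 hA0 hx0 hx256 hRa hR1 hprod, ?_, ?_⟩
  · -- x'^(3/2) < x' y'
    have exy : x*y ≤ ε^2*x^3 := by linarith [mul_lt_mul_of_pos_left hyub hx0]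
    have hxub2 : x' ≤ (3/2) * (ε^2*x^3) := by linarith
    have hy'2 : x^4/4 ≤ y'^2 := by
      have h := pow_le_pow_left₀ (by positivity : (0:ℝ) ≤ x^2/2) hy'low 2
      linarith [h]
    have hy'sq : x' < y' ^ 2 := ar8 hε0 hε4 hx0 hx256 hxub2 hy'2
    have hh : x' ^ ((1:ℝ)/2) < y' := rpow_half_lt hx'0.le hy'0.le hy'sq
    rw [rpow_three_halves hx'0]
    exact (mul_lt_mul_iff_right₀ hx'0).mpr hh
  · -- (1/ε) y'^(3/2) < x' y'
    have hysq : x < y^2 :=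
      ar10 (Real.rpow_nonneg hx0' _) hyx (rpow_half_sq hx0')
    have hx'sq : (x*y/2)^2 ≤ x'^2 :=
      pow_le_pow_left₀ (by positivity) hx'low 2
    have hy'lt : y' < (ε * x') ^ 2 :=
      ar9 hε0 hx0 hy0' hy'up hx'sq hysq hεx16
    have hh : y' ^ ((1:ℝ)/2) < ε * x' := rpow_half_lt hy'0.le (by positivity) hy'lt
    have hh2 : (1/ε) * y' ^ ((1:ℝ)/2) < x' := by
      have h := mul_lt_mul_of_pos_left hh (show (0:ℝ) < 1/ε by positivity)
      calc (1/ε) * y' ^ ((1:ℝ)/2) < (1/ε) * (ε * x') := h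
        _ = x' := by field_simp
    rw [rpow_three_halves hy'0]
    calc (1/ε) * (y' * y' ^ ((1:ℝ)/2)) = ((1/ε) * y' ^ ((1:ℝ)/2)) * y' := by ring
      _ < x' * y' := (mul_lt_mul_iff_left₀ hy'0).mpr hh2


set_option maxHeartbeats 2000000 in
theorem stmt8 (a b : ℂ) (ha : a ≠ 0) (hb : b ≠ 0) :
    ∃ ε > (0 : ℝ), ∃ R₀ > 1 / ε ^ 10, ∀ R > R₀, ∀ w ∈ Vminus a ε R,
      ∃ c > (1 : ℝ), ∀ n : ℕ,
        c ^ (2 ^ n) ≤ ‖((H a b)^[n] w).1‖ := by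
  set B := ‖b‖ with hBdef
  set A := ‖a‖ with hAdef
  have hB0 : 0 ≤ B := norm_nonneg _
  have hA0 : 0 ≤ A := norm_nonneg _
  set ε : ℝ := 1 / (4 + 4 * B) with hεdef
  have hε0 : 0 < ε := by positivity
  have hε4 : ε ≤ 1/4 := by
    rw [hεdef, div_le_div_iff₀ (by positivity) (by norm_num)]
    linarith
  have hbε : B * ε ^ 2 ≤ 1/2 := by
    have h1 : (4 + 4*B) * ε = 1 := by
      rw [hεdef]; field_simp
    nlinarith [hε0, hB0, hε4]
  refine ⟨ε, hε0, 1/ε^10 + 8 * A + 1, by linarith, ?_⟩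
  intro R hR w hw
  have hRε : 1/ε^10 < R := by linarith
  have hRa : 8 * A ≤ R := by
    have : (0:ℝ) < 1/ε^10 := by positivity
    linarith
  -- all iterates stay in V⁻
  have hmem : ∀ n : ℕ, (H a b)^[n] w ∈ Vminus a ε R := by
    intro n
    induction n with
    | zero => simpa using hw
    | succ n ih =>
      rw [Function.iterate_succ_apply']
      exact (step a b ε R hε0 hε4 hbε hRε hRa ih).1
  set xa : ℕ → ℝ := fun n => ‖((H a b)^[n] w).1‖ with hxadef
  set ya : ℕ → ℝ := fun n => ‖((H a b)^[n] w).2.1‖ with hyadef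
  have hgrow : ∀ n : ℕ, xa n * ya n / 2 ≤ xa (n+1) := by
    intro n
    have h := (step a b ε R hε0 hε4 hbε hRε hRa (hmem n)).2.1
    rw [← Function.iterate_succ_apply' (H a b) n w] at h
    exact h
  have hyl : ∀ n : ℕ, xa n ^ 2 / 2 ≤ ya (n+1) := by
    intro n
    have h := (step a b ε R hε0 hε4 hbε hRε hRa (hmem n)).2.2.1
    rw [← Function.iterate_succ_apply' (H a b) n w] at h
    exact h
  have hbig : ∀ n : ℕ, 256 < xa n := fun n =>
    (step a b ε R hε0 hε4 hbε hRε hRa (hmem n)).2.2.2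
  have hya0 : ∀ n : ℕ, 0 ≤ ya n := fun n => norm_nonneg _
  have hstep2 : ∀ n : ℕ, xa (n+1) * xa n ^ 2 / 4 ≤ xa (n+2) := by
    intro n
    have h1 := hgrow (n+1)
    have h2 := hyl n
    have h3 : (0:ℝ) < xa (n+1) := lt_trans (by norm_num) (hbig (n+1))
    nlinarith [mul_le_mul_of_nonneg_left h2 h3.le]
  set c : ℝ := min (xa 0 / 2) (Real.sqrt (xa 1 / 2)) with hcdef
  have hc1 : 1 < c := by
    rw [hcdef, lt_min_iff]
    constructor
    · linarith [hbig 0]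
    · rw [show (1:ℝ) = Real.sqrt 1 by simp]
      apply Real.sqrt_lt_sqrt (by norm_num)
      linarith [hbig 1]
  have hc0 : 0 ≤ c := by linarith
  have key : ∀ n : ℕ, c ^ (2 ^ n) ≤ xa n / 2 ∧ c ^ (2 ^ (n+1)) ≤ xa (n+1) / 2 := by
    intro n
    induction n with
    | zero =>
      constructor
      · calc c ^ (2^0) = c := by norm_num
          _ ≤ xa 0 / 2 := by rw [hcdef]; exact min_le_left _ _
      · have h1 : c ^ (2^1) = c^2 := by norm_num
        rw [h1]
        have h2 : c ^ 2 ≤ (Real.sqrt (xa 1 / 2))^2 :=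
          pow_le_pow_left₀ hc0 (min_le_right _ _) 2
        rwa [Real.sq_sqrt (by linarith [hbig 1])] at h2
    | succ n ih =>
      refine ⟨ih.2, ?_⟩
      have hexp : c ^ (2^(n+2)) = c ^ (2^(n+1)) * (c ^ (2^n))^2 := by
        rw [← pow_mul, ← pow_add]
        congr 1
        ring
      have hp1 : (0:ℝ) ≤ c ^ (2^(n+1)) := pow_nonneg hc0 _
      have hp2 : (0:ℝ) ≤ c ^ (2^n) := pow_nonneg hc0 _
      have hb1 : c ^ (2^(n+1)) ≤ xa (n+1) / 2 := ih.2
      have hb2 : (c ^ (2^n))^2 ≤ (xa n / 2)^2 :=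
        pow_le_pow_left₀ hp2 ih.1 2
      have hmul : c ^ (2^(n+1)) * (c ^ (2^n))^2 ≤ (xa (n+1) / 2) * (xa n / 2)^2 :=
        mul_le_mul hb1 hb2 (pow_nonneg hp2 2) (by linarith [hbig (n+1)])
      have hfin : (xa (n+1) / 2) * (xa n / 2)^2 ≤ xa (n+2) / 2 := by
        have := hstep2 n
        nlinarith [this]
      rw [hexp]
      linarith
  refine ⟨c, hc1, fun n => ?_⟩
  have h1 := (key n).1
  have h2 : (0:ℝ) < xa n := lt_trans (by norm_num) (hbig n)
  calc c ^ (2^n) ≤ xa n / 2 := h1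
    _ ≤ xa n := by linarith
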